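/- For every connected graph G on n vertices with diameter D, the proximity satisfies π(G) ≥ (p(p-1) + q(q-1))/(2(n-1)) + 1, where p = ⌈D/2⌉ and q = ⌊D/2⌋. -/

import Mathlib

open SimpleGraph Finset

/-- The transmission of a vertex: the sum of distances from `v` to all other vertices. -/
noncomputable def transmission {n : ℕ} (G : SimpleGraph (Fin n)) (v : Fin n) : ℕ :=
  ∑ u, G.dist v u

/-- The proximity: the minimum average distance from a vertex to all others. -/
noncomputable def proximity {n : ℕ} (G : SimpleGraph (Fin n)) : ℝ :=
  sInf {x : ℝ | ∃ v : Fin n, x = transmission G v} / (n - 1)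

/-- The remoteness: the maximum average distance from a vertex to all others. -/
noncomputable def remoteness {n : ℕ} (G : SimpleGraph (Fin n)) : ℝ :=
  sSup {x : ℝ | ∃ v : Fin n, x = transmission G v} / (n - 1)


/-- The diameter of a graph: the maximum distance between two vertices. -/
noncomputable def graphDiam {n : ℕ} (G : SimpleGraph (Fin n)) : ℕ :=
  Finset.univ.sup fun p : Fin n × Fin n => G.dist p.1 p.2

-- closed form for sum of max(|D - 2i|, 2c)
lemma Ssum (c : ℕ) (hc : c ≤ 1) : ∀ D : ℕ,
    ∑ i ∈ Finset.range (D + 1), max ((D - 2*i) + (2*i - D)) (2*c)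
      = ((D+1)/2) * ((D+1)/2 + 1) + (D/2) * (D/2 + 1) + 2*c
  | 0 => by rw [Finset.sum_range_one]; omega
  | 1 => by
      rw [Finset.sum_range_succ, Finset.sum_range_one]
      omega
  | (D+2) => by
      have ih := Ssum c hc D
      rw [show D + 2 + 1 = (D + 2) + 1 from rfl, Finset.sum_range_succ']
      have h1 : ∀ i ∈ Finset.range (D + 2),
          max ((D + 2 - 2*(i+1)) + (2*(i+1) - (D+2))) (2*c)
            = max ((D - 2*i) + (2*i - D)) (2*c) := by
        intro i _; congr 1; omega
      rw [Finset.sum_congr rfl h1, Finset.sum_range_succ, ih]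
      have h2 : max ((D - 2*(D+1)) + (2*(D+1) - D)) (2*c) = D + 2 := by omega
      have h3 : max ((D + 2 - 2*0) + (2*0 - (D+2))) (2*c) = D + 2 := by omega
      rw [h2, h3]
      have hpq : (D+1)/2 + D/2 = D := by omega
      have hp2 : (D+2+1)/2 = (D+1)/2 + 1 := by omega
      have hq2 : (D+2)/2 = D/2 + 1 := by omega
      rw [hp2, hq2]
      set P := (D+1)/2; set Q := D/2
      ring_nf
      omega

lemma key (D a c : ℕ) (hc : c ≤ 1) (f : ℕ → ℕ)
    (h1 : ∀ i ≤ D, a ≤ f i + i) (h2 : ∀ i ≤ D, i ≤ f i + a) (h3 : ∀ i ≤ D, c ≤ f i) :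
    ((D+1)/2) * ((D+1)/2 + 1) + (D/2) * (D/2 + 1) + 2*c
      ≤ 2 * ∑ i ∈ Finset.range (D + 1), f i := by
  have hrefl : ∑ i ∈ Finset.range (D + 1), f (D - i) = ∑ i ∈ Finset.range (D + 1), f i := by
    have := Finset.sum_range_reflect f (D + 1)
    simpa using this
  have h2sum : 2 * ∑ i ∈ Finset.range (D + 1), f i
      = ∑ i ∈ Finset.range (D + 1), (f i + f (D - i)) := by
    rw [Finset.sum_add_distrib, hrefl]; ring
  rw [h2sum, ← Ssum c hc D]
  apply Finset.sum_le_sum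
  intro i hi
  rw [Finset.mem_range] at hi
  have hiD : i ≤ D := by omega
  have hDi : D - i ≤ D := by omega
  have a1 := h1 i hiD
  have a2 := h2 i hiD
  have a3 := h1 (D - i) hDi
  have a4 := h2 (D - i) hDi
  have a5 := h3 i hiD
  have a6 := h3 (D - i) hDi
  omega

lemma exists_walk_getVert {V : Type*} {G : SimpleGraph V} :
    ∀ {x z : V} (w : G.Walk x z) (i : ℕ), ∃ w' : G.Walk x (w.getVert i), w'.length ≤ i := by
  intro x z w
  induction w with
  | nil => intro i; exact ⟨SimpleGraph.Walk.nil, by simp⟩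
  | @cons u b z h q ih =>
    intro i
    cases i with
    | zero => exact ⟨(SimpleGraph.Walk.nil).copy rfl (q.cons h).getVert_zero.symm, by simp⟩
    | succ i =>
      obtain ⟨w', hw'⟩ := ih i
      exact ⟨(w'.cons h).copy rfl (SimpleGraph.Walk.getVert_cons_succ q h).symm,
        by simpa using Nat.succ_le_succ hw'⟩

lemma dist_getVert_le {V : Type*} {G : SimpleGraph V} {x z : V} (w : G.Walk x z) (i : ℕ) :
    G.dist x (w.getVert i) ≤ i := by
  obtain ⟨w', hw'⟩ := exists_walk_getVert w i
  exact le_trans (SimpleGraph.dist_le w') hw'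

lemma mul_pred_helper (m : ℕ) : m * (m + 1) = m * (m - 1) + 2 * m := by
  cases m with
  | zero => rfl
  | succ k => simp [Nat.succ_sub_one]; ring

lemma cast_mul_pred (m : ℕ) : ((m * (m - 1) : ℕ) : ℝ) = (m : ℝ) * ((m : ℝ) - 1) := by
  cases m with
  | zero => simp
  | succ k => push_cast [Nat.succ_sub_one]; ring



theorem proximity_lower_bound_diam {n : ℕ} (hn : 2 ≤ n) (G : SimpleGraph (Fin n))
    (hG : G.Connected) (p q : ℕ) (hp : p = (graphDiam G + 1) / 2) (hq : q = graphDiam G / 2) :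
    ((p : ℝ) * (p - 1) + (q : ℝ) * (q - 1)) / (2 * (n - 1)) + 1 ≤ proximity G := by
  set D := graphDiam G with hD
  obtain ⟨⟨x, y⟩, -, hxy⟩ :=
    Finset.exists_mem_eq_sup (Finset.univ : Finset (Fin n × Fin n))
      ⟨(⟨0, by omega⟩, ⟨0, by omega⟩), Finset.mem_univ _⟩
      (fun p : Fin n × Fin n => G.dist p.1 p.2)
  have hDxy : D = G.dist x y := hxy
  obtain ⟨w, hw⟩ := hG.exists_walk_length_eq_dist x y
  have hwlen : w.length = D := by rw [hw, hDxy]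
  have hgv : ∀ i ≤ D, G.dist x (w.getVert i) = i := by
    intro i hi
    have hle : G.dist x (w.getVert i) ≤ i := dist_getVert_le w i
    have hrev : G.dist y (w.getVert i) ≤ D - i := by
      have := dist_getVert_le w.reverse (D - i)
      rwa [SimpleGraph.Walk.getVert_reverse, hwlen, show D - (D - i) = i by omega] at this
    have htri : G.dist x y ≤ G.dist x (w.getVert i) + G.dist (w.getVert i) y :=
      hG.dist_triangle
    rw [← hDxy] at htri; rw [SimpleGraph.dist_comm] at hrev
    omega
  -- per-vertex bound in ℕ
  have hmain : ∀ v : Fin n,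
      p * (p - 1) + q * (q - 1) + 2 * (n - 1) ≤ 2 * transmission G v := by
    intro v
    classical
    set Simg : Finset (Fin n) := (Finset.range (D + 1)).image w.getVert with hSimg
    have hinj : ∀ i ∈ Finset.range (D + 1), ∀ j ∈ Finset.range (D + 1),
        w.getVert i = w.getVert j → i = j := by
      intro i hi j hj hij
      rw [Finset.mem_range] at hi hj
      have h1 := hgv i (by omega)
      have h2 := hgv j (by omega)
      rw [hij] at h1
      omega
    have hcard : Simg.card = D + 1 := by
      rw [hSimg, Finset.card_image_of_injOn (fun a ha b hb => hinj a ha b hb),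
        Finset.card_range]
    have hDn : D + 1 ≤ n := by
      have := Finset.card_le_univ Simg
      simpa [hcard] using this
    have hkey : ∀ c : ℕ, c ≤ 1 → (∀ i ≤ D, c ≤ G.dist v (w.getVert i)) →
        ((D+1)/2) * ((D+1)/2 + 1) + (D/2) * (D/2 + 1) + 2 * c
          ≤ 2 * ∑ i ∈ Finset.range (D + 1), G.dist v (w.getVert i) := by
      intro c hc1 h3
      exact key D (G.dist v x) c hc1 (fun i => G.dist v (w.getVert i))
        (fun i hi => by
          show G.dist v x ≤ G.dist v (w.getVert i) + i
          have htri : G.dist v x ≤ G.dist v (w.getVert i) + G.dist (w.getVert i) x :=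
            hG.dist_triangle
          have hcm : G.dist (w.getVert i) x = i := by
            rw [SimpleGraph.dist_comm]; exact hgv i hi
          omega)
        (fun i hi => by
          show i ≤ G.dist v (w.getVert i) + G.dist v x
          have htri : G.dist x (w.getVert i) ≤ G.dist x v + G.dist v (w.getVert i) :=
            hG.dist_triangle
          have h1 := hgv i hi
          have h2 : G.dist x v = G.dist v x := SimpleGraph.dist_comm ..
          omega)
        h3
    have hsplit : transmission G v
        = (∑ u ∈ Finset.univ \ Simg, G.dist v u)
          + ∑ i ∈ Finset.range (D + 1), G.dist v (w.getVert i) := by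
      rw [transmission, ← Finset.sum_sdiff (Finset.subset_univ Simg)]
      congr 1
      rw [hSimg, Finset.sum_image hinj]
    have hA : ((D+1)/2) * ((D+1)/2 + 1) = p * (p - 1) + 2 * p := by
      rw [← hp]; exact mul_pred_helper p
    have hB : (D/2) * (D/2 + 1) = q * (q - 1) + 2 * q := by
      rw [← hq]; exact mul_pred_helper q
    have hpq : p + q = D := by omega
    by_cases hvS : v ∈ Simg
    · have hpath := hkey 0 (by omega) (fun i hi => Nat.zero_le _)
      have hrest : n - (D + 1) ≤ ∑ u ∈ Finset.univ \ Simg, G.dist v u := by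
        have hone : ∀ u ∈ Finset.univ \ Simg, 1 ≤ G.dist v u := by
          intro u hu
          rw [Finset.mem_sdiff] at hu
          have hne : v ≠ u := fun h => hu.2 (h ▸ hvS)
          exact Nat.succ_le_of_lt (hG.pos_dist_of_ne hne)
        calc n - (D + 1) = (Finset.univ \ Simg).card := by
              rw [Finset.card_sdiff_of_subset (Finset.subset_univ _), hcard, Finset.card_univ,
                Fintype.card_fin]
          _ ≤ ∑ u ∈ Finset.univ \ Simg, G.dist v u := by
              simpa using Finset.card_nsmul_le_sum _ _ 1 hone
      rw [hsplit]
      rw [hA, hB] at hpath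
      omega
    · have hpath := hkey 1 (by omega) (fun i hi => by
        have hne : v ≠ w.getVert i := by
          intro hvv
          apply hvS
          rw [hSimg]
          exact Finset.mem_image.2 ⟨i, Finset.mem_range.2 (by omega), hvv.symm⟩
        exact Nat.succ_le_of_lt (hG.pos_dist_of_ne hne))
      have hrest : n - (D + 2) ≤ ∑ u ∈ Finset.univ \ Simg, G.dist v u := by
        have hone : ∀ u ∈ (Finset.univ \ Simg).erase v, 1 ≤ G.dist v u := by
          intro u hu
          have hne : v ≠ u := fun h => (Finset.mem_erase.1 hu).1 h.symm
          exact Nat.succ_le_of_lt (hG.pos_dist_of_ne hne)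
        have hvmem : v ∈ Finset.univ \ Simg := Finset.mem_sdiff.2 ⟨Finset.mem_univ _, hvS⟩
        calc n - (D + 2) ≤ ((Finset.univ \ Simg).erase v).card := by
              rw [Finset.card_erase_of_mem hvmem, Finset.card_sdiff_of_subset (Finset.subset_univ _),
                hcard, Finset.card_univ, Fintype.card_fin]
              omega
          _ ≤ ∑ u ∈ (Finset.univ \ Simg).erase v, G.dist v u := by
              simpa using Finset.card_nsmul_le_sum _ _ 1 hone
          _ ≤ ∑ u ∈ Finset.univ \ Simg, G.dist v u :=
              Finset.sum_le_sum_of_subset (Finset.erase_subset _ _)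
      rw [hsplit]
      rw [hA, hB] at hpath
      omega
  -- pass to the reals
  have hn1 : (0:ℝ) < (n:ℝ) - 1 := by
    have : (2:ℝ) ≤ (n:ℝ) := by exact_mod_cast hn
    linarith
  have hne : {x : ℝ | ∃ v : Fin n, x = transmission G v}.Nonempty :=
    ⟨transmission G ⟨0, by omega⟩, ⟨0, by omega⟩, rfl⟩
  have hlb : ∀ b ∈ {x : ℝ | ∃ v : Fin n, x = transmission G v},
      ((p : ℝ) * (p - 1) + (q : ℝ) * (q - 1)) / 2 + ((n:ℝ) - 1) ≤ b := by
    rintro b ⟨v, rfl⟩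
    have h := hmain v
    have hcast : ((p * (p - 1) + q * (q - 1) + 2 * (n - 1) : ℕ) : ℝ)
        ≤ ((2 * transmission G v : ℕ) : ℝ) := Nat.cast_le.2 h
    rw [Nat.cast_add, Nat.cast_add, cast_mul_pred, cast_mul_pred] at hcast
    push_cast [Nat.cast_sub (show 1 ≤ n by omega)] at hcast
    linarith
  have hInf : ((p : ℝ) * (p - 1) + (q : ℝ) * (q - 1)) / 2 + ((n:ℝ) - 1)
      ≤ sInf {x : ℝ | ∃ v : Fin n, x = transmission G v} := le_csInf hne hlb
  unfold proximity
  rw [le_div_iff₀ hn1]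
  have hfield : (((p : ℝ) * (p - 1) + (q : ℝ) * (q - 1)) / (2 * ((n:ℝ) - 1)) + 1) * ((n:ℝ) - 1)
      = ((p : ℝ) * (p - 1) + (q : ℝ) * (q - 1)) / 2 + ((n:ℝ) - 1) := by
    field_simp
  rw [hfield]
  exact hInf
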